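/- In any C-algebra M, the relation defined by a ≤ b iff a ∨ b = b is a partial order on M. -/

import Mathlib

/-- A C-algebra (Guzmán–Squier): algebra of McCarthy's three-valued conditional logic. -/
class CAlgebra (M : Type*) where
  or : M → M → M
  and : M → M → M
  neg : M → M
  c1 : ∀ a, neg (neg a) = a
  c2 : ∀ a b, neg (and a b) = or (neg a) (neg b)
  c3 : ∀ a b c, and (and a b) c = and a (and b c)
  c4 : ∀ a b c, and a (or b c) = or (and a b) (and a c)
  c5 : ∀ a b c, and (or a b) c = or (and a c) (and (neg a) (and b c))
  c6 : ∀ a b, or a (and a b) = a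
  c7 : ∀ a b, or (and a b) (and b a) = or (and b a) (and a b)

/-- A C-algebra with constants T, F, U. -/
class CAlgebraTFU (M : Type*) extends CAlgebra M where
  T : M
  F : M
  U : M
  T_and : ∀ a : M, and T a = a
  and_T : ∀ a : M, and a T = a
  F_or : ∀ a : M, or F a = a
  or_F : ∀ a : M, or a F = a
  neg_U : neg U = U
  U_and : ∀ a : M, and U a = U
  U_or : ∀ a : M, or U a = U
  F_and : ∀ a : M, and F a = F
  T_or : ∀ a : M, or T a = T

namespace CAlgebra

variable {M : Type*} [CAlgebra M]

lemma c2' (a b : M) : neg (or a b) = and (neg a) (neg b) := by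
  have := c2 (neg a) (neg b)
  rw [c1, c1] at this
  rw [← this, c1]

lemma or_def (a b : M) : or a b = neg (and (neg a) (neg b)) := by
  rw [← c2', c1]

lemma or_assoc' (a b c : M) : or (or a b) c = or a (or b c) := by
  rw [or_def (or a b) c, c2', or_def a (or b c), c2', c3]

lemma and_or_self (a b : M) : and a (or a b) = a := by
  have h : neg (and a (or a b)) = neg a := by
    rw [c2, c2', c6]
  calc and a (or a b) = neg (neg (and a (or a b))) := (c1 _).symm
    _ = neg (neg a) := by rw [h]
    _ = a := c1 _

lemma or_idem (a : M) : or a a = a := by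
  nth_rewrite 2 [← and_or_self a a]
  exact c6 a (or a a)

end CAlgebra

/-- In any C-algebra, `a ≤ b ↔ a ∨ b = b` is a partial order. -/
theorem stmt0 {M : Type*} [CAlgebra M] :
    IsPartialOrder M (fun a b => CAlgebra.or a b = b) := by
  refine { refl := fun a => CAlgebra.or_idem a,
           trans := fun a b c hab hbc => ?_,
           antisymm := fun a b hab hba => ?_ }
  · rw [← hbc, ← CAlgebra.or_assoc', hab]
  · have h1 : CAlgebra.and a b = a := by
      rw [← hab]; exact CAlgebra.and_or_self a b
    have h2 : CAlgebra.and b a = b := by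
      rw [← hba]; exact CAlgebra.and_or_self b a
    have h3 := CAlgebra.c7 a b
    rw [h1, h2, hab, hba] at h3
    exact h3.symm
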